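/- Let 𝒜 be a commutative Banach algebra and let I be a nonzero closed ideal of 𝒜 possessing a bounded approximate identity. Then every weakly almost periodic functional on I is uniformly continuous: WAP(I) ⊆ UCB(I). -/

import Mathlib

open NormedSpace Filter

/-- The dual module action: `⟨u·T, v⟩ = ⟨T, v * u⟩`. -/
noncomputable def dualAct {A : Type*} [NormedCommRing A] [NormedAlgebra ℂ A]
    (u : A) (T : StrongDual ℂ A) : StrongDual ℂ A :=
  T.comp ((ContinuousLinearMap.mul ℂ A).flip u)

/-- `T` is weakly almost periodic. -/
def IsWAP {A : Type*} [NormedCommRing A] [NormedAlgebra ℂ A] (T : StrongDual ℂ A) : Prop :=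
  IsCompact (closure (toWeakSpace ℂ (StrongDual ℂ A) ''
    {S : StrongDual ℂ A | ∃ u : A, ‖u‖ ≤ 1 ∧ S = dualAct u T}))

/-- `UCB(I)`: the norm-closed linear span of `{u·T : u ∈ I, T ∈ I*}`. -/
noncomputable def UCB (A : Type*) [NormedCommRing A] [NormedAlgebra ℂ A] : Set (StrongDual ℂ A) :=
  closure (Submodule.span ℂ
    {S : StrongDual ℂ A | ∃ (v : A) (T : StrongDual ℂ A), S = dualAct v T} : Set (StrongDual ℂ A))

lemma dualAct_apply {A : Type*} [NormedCommRing A] [NormedAlgebra ℂ A]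
    (u : A) (T : StrongDual ℂ A) (v : A) : dualAct u T v = T (v * u) := rfl

lemma dualAct_smul {A : Type*} [NormedCommRing A] [NormedAlgebra ℂ A]
    (c : ℂ) (u : A) (T : StrongDual ℂ A) : dualAct (c • u) T = c • dualAct u T := by
  ext v
  simp [dualAct_apply, mul_smul_comm]

/-- if the (nonzero, closed) ideal `I`, viewed as a commutative Banach algebra
in its own right, has a bounded approximate identity, then `WAP(I) ⊆ UCB(I)`. -/
theorem WAP_subset_UCB_of_bai
    (I : Type*) [NormedCommRing I] [NormedAlgebra ℂ I] [CompleteSpace I] [Nontrivial I]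
    (bai : ∃ (ι : Type) (l : Filter ι) (u : ι → I), l.NeBot ∧ (∃ C : ℝ, ∀ i, ‖u i‖ ≤ C) ∧
      ∀ v : I, Tendsto (fun i => u i * v) l (nhds v))
    (T : StrongDual ℂ I) (hT : IsWAP T) : T ∈ UCB I := by
  obtain ⟨ι, l, u, hl, ⟨C, hC⟩, hlim⟩ := bai
  set C' : ℝ := max C 1 with hC'def
  have hC'pos : (0 : ℝ) < C' := lt_of_lt_of_le one_pos (le_max_right _ _)
  set c : ℂ := (C' : ℂ) with hcdef
  have hc0 : c ≠ 0 := by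
    simp [hcdef, Complex.ofReal_ne_zero]
    exact ne_of_gt hC'pos
  set w : ι → I := fun i => c⁻¹ • u i with hwdef
  have hw : ∀ i, ‖w i‖ ≤ 1 := by
    intro i
    have h1 : ‖w i‖ = C'⁻¹ * ‖u i‖ := by
      simp [hwdef, norm_smul, hcdef, abs_of_pos hC'pos]
    rw [h1]
    have h2 : ‖u i‖ ≤ C' := le_trans (hC i) (le_max_left _ _)
    calc C'⁻¹ * ‖u i‖ ≤ C'⁻¹ * C' := by
          exact mul_le_mul_of_nonneg_left h2 (inv_nonneg.mpr hC'pos.le)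
      _ = 1 := inv_mul_cancel₀ (ne_of_gt hC'pos)
  set S : ι → StrongDual ℂ I := fun i => dualAct (w i) T with hSdef
  set M : Submodule ℂ (StrongDual ℂ I) := Submodule.span ℂ
    {S : StrongDual ℂ I | ∃ (v : I) (T : StrongDual ℂ I), S = dualAct v T} with hMdef
  set F : Filter (WeakSpace ℂ (StrongDual ℂ I)) :=
    Filter.map (fun i => toWeakSpace ℂ (StrongDual ℂ I) (S i)) l with hFdef
  haveI : F.NeBot := hl.map _
  -- F lives inside the (image of the) orbit
  have hmem : ∀ i, S i ∈ {S : StrongDual ℂ I | ∃ u : I, ‖u‖ ≤ 1 ∧ S = dualAct u T} :=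
    fun i => ⟨w i, hw i, rfl⟩
  have hFle : F ≤ Filter.principal (closure (toWeakSpace ℂ (StrongDual ℂ I) ''
      {S : StrongDual ℂ I | ∃ u : I, ‖u‖ ≤ 1 ∧ S = dualAct u T})) := by
    rw [le_principal_iff, hFdef, mem_map]
    filter_upwards with i
    exact subset_closure ⟨S i, hmem i, rfl⟩
  obtain ⟨x, -, hx⟩ := hT.exists_clusterPt hFle
  -- F also lives inside the span, so x is in the weak closure of the span
  have hFleM : F ≤ Filter.principal (toWeakSpace ℂ (StrongDual ℂ I) '' (M : Set (StrongDual ℂ I))) := by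
    rw [le_principal_iff, hFdef, mem_map]
    filter_upwards with i
    exact ⟨S i, Submodule.subset_span ⟨w i, T, rfl⟩, rfl⟩
  have hxcl : x ∈ closure (toWeakSpace ℂ (StrongDual ℂ I) '' (M : Set (StrongDual ℂ I))) :=
    mem_closure_iff_clusterPt.mpr (hx.mono hFleM)
  -- weak closure of a convex set equals norm closure
  have hconv : Convex ℝ (M : Set (StrongDual ℂ I)) := by
    have := (M.restrictScalars ℝ).convex
    simpa using this
  rw [← hconv.toWeakSpace_closure (𝕜 := ℂ)] at hxcl
  obtain ⟨y, hyM, hyx⟩ := hxcl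
  -- identify y with c⁻¹ • T via evaluations
  have hy : y = c⁻¹ • T := by
    ext v
    -- evaluation at v is weakly continuous
    have hcont : Continuous fun z : WeakSpace ℂ (StrongDual ℂ I) =>
        (topDualPairing ℂ (StrongDual ℂ I)).flip z (inclusionInDoubleDual ℂ I v) :=
      WeakBilin.eval_continuous _ _
    have hclmap := hx.map hcont.continuousAt (Filter.tendsto_map' tendsto_map)
    -- the evaluated net converges to c⁻¹ * T v
    have htend : Tendsto (fun i =>
        (topDualPairing ℂ (StrongDual ℂ I)).flip (toWeakSpace ℂ (StrongDual ℂ I) (S i))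
          (inclusionInDoubleDual ℂ I v)) l (nhds (c⁻¹ * T v)) := by
      have h1 : ∀ i, (topDualPairing ℂ (StrongDual ℂ I)).flip (toWeakSpace ℂ (StrongDual ℂ I) (S i))
          (inclusionInDoubleDual ℂ I v) = c⁻¹ * T (u i * v) := by
        intro i
        show (S i) v = c⁻¹ * T (u i * v)
        simp [hSdef, hwdef, dualAct_smul, dualAct_apply, mul_comm v (u i)]
      simp only [h1]
      exact (T.continuous.tendsto v).comp (hlim v) |>.const_mul c⁻¹
    -- cluster point of a convergent filter is its limit
    have hne : NeBot (Filter.map (fun i =>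
        (topDualPairing ℂ (StrongDual ℂ I)).flip (toWeakSpace ℂ (StrongDual ℂ I) (S i))
          (inclusionInDoubleDual ℂ I v)) l) := hl.map _
    have : (topDualPairing ℂ (StrongDual ℂ I)).flip x (inclusionInDoubleDual ℂ I v)
        = c⁻¹ * T v :=
      eq_of_nhds_neBot (hclmap.mono htend)
    -- translate back
    have hxy : (topDualPairing ℂ (StrongDual ℂ I)).flip x (inclusionInDoubleDual ℂ I v) = y v := by
      rw [← hyx]; rfl
    rw [hxy] at this
    simpa using this
  -- conclude: y ∈ closure M = UCB, and UCB is closed under scalar multiplication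
  have hyUCB : y ∈ M.topologicalClosure := by
    rw [Submodule.topologicalClosure]
    exact hyM
  have hTU : T ∈ M.topologicalClosure := by
    have : T = c • y := by
      rw [hy, smul_smul, mul_inv_cancel₀ hc0, one_smul]
    rw [this]
    exact M.topologicalClosure.smul_mem c hyUCB
  exact hTU
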